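/- Suppose A₁, A₂ are square matrices satisfying ‖A_i^k‖ ≤ τρ^k for all k ≥ 0 (τ ≥ 1, ρ ∈ (0,1)), and Q₁, Q₂ are positive semidefinite. Let P_i = dlyap(A_i, Q_i). Then ‖P₁ − P₂‖ ≤ (τ²/(1−ρ²)) ‖Q₁−Q₂‖ + (τ⁴/(1−ρ²)²) ‖A₁−A₂‖ (‖A₁‖+‖A₂‖) ‖Q₂‖. -/

import Mathlib

open Matrix MeasureTheory ProbabilityTheory
open scoped Classical RealInnerProductSpace

/-- Operator (spectral) norm of a real matrix. -/
noncomputable def opNorm {m n : Type*} [Fintype m] [Fintype n] [DecidableEq n]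
    (A : Matrix m n ℝ) : ℝ :=
  ‖LinearMap.toContinuousLinearMap (Matrix.toEuclideanLin A)‖

/-- Frobenius norm of a real matrix. -/
noncomputable def frob {m n : Type*} [Fintype m] [Fintype n] (A : Matrix m n ℝ) : ℝ :=
  Real.sqrt (∑ i, ∑ j, (A i j) ^ 2)

/-- Positive semidefinite square root (junk value `0` off the PSD matrices). -/
noncomputable def sqrtPD {n : Type*} [Fintype n] [DecidableEq n]
    (A : Matrix n n ℝ) : Matrix n n ℝ :=
  if h : A.PosSemidef then
    (h.1.eigenvectorUnitary : Matrix n n ℝ) * Matrix.diagonal ((↑) ∘ Real.sqrt ∘ h.1.eigenvalues) *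
      (star h.1.eigenvectorUnitary : Matrix n n ℝ)
  else 0

/-- Matrix logarithm of a hermitian matrix via the spectral theorem
(junk value `0` off the hermitian matrices). -/
noncomputable def mlog {n : Type*} [Fintype n] [DecidableEq n]
    (A : Matrix n n ℝ) : Matrix n n ℝ :=
  if h : A.IsHermitian then
    (h.eigenvectorUnitary : Matrix n n ℝ) * Matrix.diagonal (Real.log ∘ h.eigenvalues) *
      (star (h.eigenvectorUnitary : Matrix n n ℝ))
  else 0

/-- Thompson (invariant) metric `δ∞(A,B) = ‖log (A^{-1/2} B A^{-1/2})‖`. -/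
noncomputable def thompson {n : Type*} [Fintype n] [DecidableEq n]
    (A B : Matrix n n ℝ) : ℝ :=
  opNorm (mlog ((sqrtPD A)⁻¹ * B * (sqrtPD A)⁻¹))

/-- Largest (real) eigenvalue. -/
noncomputable def lamMax {n : Type*} [Fintype n] [DecidableEq n] (A : Matrix n n ℝ) : ℝ :=
  sSup (spectrum ℝ A)

/-- Smallest (real) eigenvalue. -/
noncomputable def lamMin {n : Type*} [Fintype n] [DecidableEq n] (A : Matrix n n ℝ) : ℝ :=
  sInf (spectrum ℝ A)

/-- Solution `P = Σ_{k≥0} (Lᵀ)^k M L^k` of the discrete Lyapunov equation `P = Lᵀ P L + M`. -/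
noncomputable def dlyap {n : Type*} [Fintype n] [DecidableEq n]
    (L M : Matrix n n ℝ) : Matrix n n ℝ :=
  ∑' k : ℕ, (L ^ k)ᵀ * M * (L ^ k)

/-- `K` stabilizes `(A,B)`: the closed loop matrix `A + BK` has spectral radius `< 1`. -/
def Stabilizes {n d : Type*} [Fintype n] [DecidableEq n] [Fintype d]
    (A : Matrix n n ℝ) (B : Matrix n d ℝ) (K : Matrix d n ℝ) : Prop :=
  ∀ z ∈ spectrum ℂ ((A + B * K).map ((↑) : ℝ → ℂ)), ‖z‖ < 1

section DlyapAux
open scoped Matrix.Norms.L2Operator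

variable {n : ℕ}

private lemma opNorm_eq_norm (A : Matrix (Fin n) (Fin n) ℝ) : opNorm A = ‖A‖ := rfl

private lemma dlyap_norm_transpose (A : Matrix (Fin n) (Fin n) ℝ) : ‖Aᵀ‖ = ‖A‖ := by
  rw [← Matrix.l2_opNorm_conjTranspose A]; congr 1

private lemma dlyap_split {R : Type*} [Ring R] (X Y P Q a b : R) :
    X * P * a - Y * Q * b = X * (P - Q) * a + (X * Q * (a - b) + (X - Y) * Q * b) := by
  noncomm_ring

private lemma dlyap_pow_sub_pow (A B : Matrix (Fin n) (Fin n) ℝ) (k : ℕ) :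
    A ^ k - B ^ k = ∑ j ∈ Finset.range k, A ^ j * (A - B) * B ^ (k - 1 - j) := by
  induction k with
  | zero => simp
  | succ k ih =>
    rw [Finset.sum_range_succ]
    have h1 : ∀ j ∈ Finset.range k,
        A ^ j * (A - B) * B ^ (k + 1 - 1 - j) = A ^ j * (A - B) * B ^ (k - 1 - j) * B := by
      intro j hj
      rw [Finset.mem_range] at hj
      have : k + 1 - 1 - j = (k - 1 - j) + 1 := by omega
      rw [this, pow_succ, ← mul_assoc]
    rw [Finset.sum_congr rfl h1, ← Finset.sum_mul, ← ih]
    have : k + 1 - 1 - k = 0 := by omega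
    rw [this, pow_zero, mul_one]
    noncomm_ring

private lemma dlyap_norm_pow_sub_pow {A B : Matrix (Fin n) (Fin n) ℝ} {τ ρ : ℝ}
    (hτ : 0 ≤ τ) (hρ : 0 ≤ ρ)
    (hA : ∀ k : ℕ, ‖A ^ k‖ ≤ τ * ρ ^ k) (hB : ∀ k : ℕ, ‖B ^ k‖ ≤ τ * ρ ^ k) (k : ℕ) :
    ‖A ^ k - B ^ k‖ ≤ k * (τ ^ 2 * ρ ^ (k - 1)) * ‖A - B‖ := by
  rw [dlyap_pow_sub_pow]
  calc ‖∑ j ∈ Finset.range k, A ^ j * (A - B) * B ^ (k - 1 - j)‖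
      ≤ ∑ j ∈ Finset.range k, ‖A ^ j * (A - B) * B ^ (k - 1 - j)‖ := norm_sum_le _ _
    _ ≤ ∑ j ∈ Finset.range k, τ ^ 2 * ρ ^ (k - 1) * ‖A - B‖ := by
        apply Finset.sum_le_sum
        intro j hj
        rw [Finset.mem_range] at hj
        calc ‖A ^ j * (A - B) * B ^ (k - 1 - j)‖
            ≤ ‖A ^ j * (A - B)‖ * ‖B ^ (k - 1 - j)‖ := norm_mul_le _ _
          _ ≤ ‖A ^ j‖ * ‖A - B‖ * ‖B ^ (k - 1 - j)‖ := by
              gcongr; exact norm_mul_le _ _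
          _ ≤ (τ * ρ ^ j) * ‖A - B‖ * (τ * ρ ^ (k - 1 - j)) := by
              gcongr
              · exact hA j
              · exact hB _
          _ = τ ^ 2 * (ρ ^ j * ρ ^ (k - 1 - j)) * ‖A - B‖ := by ring
          _ = τ ^ 2 * ρ ^ (k - 1) * ‖A - B‖ := by
              have hjk : j + (k - 1 - j) = k - 1 := by omega
              rw [← pow_add, hjk]
    _ = k * (τ ^ 2 * ρ ^ (k - 1)) * ‖A - B‖ := by
        rw [Finset.sum_const, Finset.card_range, nsmul_eq_mul]; ring

set_option maxHeartbeats 1600000 in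
private theorem dlyap_perturbation_aux {n : ℕ} (A₁ A₂ Q₁ Q₂ : Matrix (Fin n) (Fin n) ℝ)
    (hQ₁ : Q₁.PosSemidef) (hQ₂ : Q₂.PosSemidef)
    (τ ρ : ℝ) (hτ : 1 ≤ τ) (hρ : ρ ∈ Set.Ioo (0 : ℝ) 1)
    (hA₁ : ∀ k : ℕ, opNorm (A₁ ^ k) ≤ τ * ρ ^ k)
    (hA₂ : ∀ k : ℕ, opNorm (A₂ ^ k) ≤ τ * ρ ^ k) :
    opNorm (dlyap A₁ Q₁ - dlyap A₂ Q₂) ≤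
      τ ^ 2 / (1 - ρ ^ 2) * opNorm (Q₁ - Q₂) +
        τ ^ 4 / (1 - ρ ^ 2) ^ 2 * opNorm (A₁ - A₂) * (opNorm A₁ + opNorm A₂) * opNorm Q₂ := by
  have hρ0 : 0 < ρ := hρ.1
  have hρ1 : ρ < 1 := hρ.2
  have hτ0 : (0:ℝ) ≤ τ := le_trans zero_le_one hτ
  set r : ℝ := ρ ^ 2 with hr
  have hr0 : 0 < r := by positivity
  have hr1 : r < 1 := by
    calc r = ρ * ρ := sq ρ
      _ < 1 * 1 := by apply mul_lt_mul' (le_of_lt hρ1) hρ1 (le_of_lt hρ0) one_pos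
      _ = 1 := one_mul 1
  have h1r : 0 < 1 - r := by linarith
  simp only [opNorm_eq_norm] at hA₁ hA₂ ⊢
  set Δ := ‖A₁ - A₂‖ with hΔ
  set S := ‖A₁‖ + ‖A₂‖ with hS
  have hΔ0 : 0 ≤ Δ := norm_nonneg _
  have hS0 : 0 ≤ S := by positivity
  -- power norm bounds for transposes
  have hA₁t : ∀ k : ℕ, ‖((A₁ ^ k)ᵀ : Matrix (Fin n) (Fin n) ℝ)‖ ≤ τ * ρ ^ k := by
    intro k; rw [dlyap_norm_transpose]; exact hA₁ k
  have hA₂t : ∀ k : ℕ, ‖((A₂ ^ k)ᵀ : Matrix (Fin n) (Fin n) ℝ)‖ ≤ τ * ρ ^ k := by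
    intro k; rw [dlyap_norm_transpose]; exact hA₂ k
  -- strip lemma for k ≥ 1
  have hstrip : ∀ (A : Matrix (Fin n) (Fin n) ℝ), (∀ k : ℕ, ‖A ^ k‖ ≤ τ * ρ ^ k) →
      ∀ m : ℕ, ‖A ^ (m + 1)‖ ≤ ‖A‖ * (τ * ρ ^ m) := by
    intro A hA m
    calc ‖A ^ (m + 1)‖ = ‖A * A ^ m‖ := by rw [pow_succ']
      _ ≤ ‖A‖ * ‖A ^ m‖ := norm_mul_le _ _
      _ ≤ ‖A‖ * (τ * ρ ^ m) := by gcongr; exact hA m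
  -- summand functions
  set g₁ : ℕ → Matrix (Fin n) (Fin n) ℝ := fun k => (A₁ ^ k)ᵀ * Q₁ * (A₁ ^ k) with hg₁
  set g₂ : ℕ → Matrix (Fin n) (Fin n) ℝ := fun k => (A₂ ^ k)ᵀ * Q₂ * (A₂ ^ k) with hg₂
  have hgbound : ∀ (A Q : Matrix (Fin n) (Fin n) ℝ), (∀ k : ℕ, ‖A ^ k‖ ≤ τ * ρ ^ k) →
      ∀ k : ℕ, ‖(A ^ k)ᵀ * Q * (A ^ k)‖ ≤ (τ ^ 2 * ‖Q‖) * r ^ k := by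
    intro A Q hA k
    calc ‖(A ^ k)ᵀ * Q * (A ^ k)‖ ≤ ‖(A ^ k)ᵀ * Q‖ * ‖A ^ k‖ := norm_mul_le _ _
      _ ≤ ‖(A ^ k)ᵀ‖ * ‖Q‖ * ‖A ^ k‖ := by gcongr; exact norm_mul_le _ _
      _ ≤ (τ * ρ ^ k) * ‖Q‖ * (τ * ρ ^ k) := by
          gcongr
          · rw [dlyap_norm_transpose]; exact hA k
          · exact hA k
      _ = (τ ^ 2 * ‖Q‖) * r ^ k := by rw [hr]; ring
  have hsum_geom : Summable (fun k : ℕ => r ^ k) := summable_geometric_of_lt_one hr0.le hr1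
  have hSummg₁ : Summable g₁ := by
    apply Summable.of_norm_bounded (hsum_geom.mul_left (τ ^ 2 * ‖Q₁‖))
    exact hgbound A₁ Q₁ hA₁
  have hSummg₂ : Summable g₂ := by
    apply Summable.of_norm_bounded (hsum_geom.mul_left (τ ^ 2 * ‖Q₂‖))
    exact hgbound A₂ Q₂ hA₂
  have hdiff : dlyap A₁ Q₁ - dlyap A₂ Q₂ = ∑' k : ℕ, (g₁ k - g₂ k) := by
    rw [dlyap, dlyap, ← Summable.tsum_sub hSummg₁ hSummg₂]
  -- per-k bound
  have hkey : ∀ k : ℕ, ‖g₁ k - g₂ k‖ ≤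
      (τ ^ 2 * ‖Q₁ - Q₂‖) * r ^ k + (τ ^ 3 * S * Δ * ‖Q₂‖) * ((k : ℝ) * r ^ (k - 1)) := by
    intro k
    have hsplit : g₁ k - g₂ k = (A₁ ^ k)ᵀ * (Q₁ - Q₂) * (A₁ ^ k) +
        ((A₁ ^ k)ᵀ * Q₂ * ((A₁ ^ k) - (A₂ ^ k)) + ((A₁ ^ k)ᵀ - (A₂ ^ k)ᵀ) * Q₂ * (A₂ ^ k)) := by
      exact dlyap_split _ _ _ _ _ _
    rw [hsplit]
    refine le_trans (norm_add_le _ _) (add_le_add (hgbound A₁ (Q₁ - Q₂) hA₁ k) ?_)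
    rcases k with _ | m
    · simp
    · have hm : m + 1 - 1 = m := rfl
      have hpow : ‖A₁ ^ (m + 1) - A₂ ^ (m + 1)‖ ≤ (m + 1 : ℝ) * (τ ^ 2 * ρ ^ m) * Δ := by
        have := dlyap_norm_pow_sub_pow hτ0 hρ0.le hA₁ hA₂ (m + 1)
        simpa [hm] using this
      have hpowt : ‖(A₁ ^ (m + 1))ᵀ - (A₂ ^ (m + 1))ᵀ‖ ≤ (m + 1 : ℝ) * (τ ^ 2 * ρ ^ m) * Δ := by
        rw [← Matrix.transpose_sub, dlyap_norm_transpose]; exact hpow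
      have h1 : ‖(A₁ ^ (m + 1))ᵀ * Q₂ * ((A₁ ^ (m + 1)) - (A₂ ^ (m + 1)))‖ ≤
          (‖A₁‖ * (τ * ρ ^ m)) * ‖Q₂‖ * ((m + 1 : ℝ) * (τ ^ 2 * ρ ^ m) * Δ) := by
        calc ‖(A₁ ^ (m + 1))ᵀ * Q₂ * ((A₁ ^ (m + 1)) - (A₂ ^ (m + 1)))‖
            ≤ ‖(A₁ ^ (m + 1))ᵀ * Q₂‖ * ‖(A₁ ^ (m + 1)) - (A₂ ^ (m + 1))‖ := norm_mul_le _ _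
          _ ≤ ‖(A₁ ^ (m + 1))ᵀ‖ * ‖Q₂‖ * ‖(A₁ ^ (m + 1)) - (A₂ ^ (m + 1))‖ := by
              gcongr; exact norm_mul_le _ _
          _ ≤ (‖A₁‖ * (τ * ρ ^ m)) * ‖Q₂‖ * ((m + 1 : ℝ) * (τ ^ 2 * ρ ^ m) * Δ) := by
              gcongr <;>
                first
                  | (rw [dlyap_norm_transpose]; exact hstrip A₁ hA₁ m)
                  | exact hpow
                  | positivity
      have h2 : ‖((A₁ ^ (m + 1))ᵀ - (A₂ ^ (m + 1))ᵀ) * Q₂ * (A₂ ^ (m + 1))‖ ≤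
          ((m + 1 : ℝ) * (τ ^ 2 * ρ ^ m) * Δ) * ‖Q₂‖ * (‖A₂‖ * (τ * ρ ^ m)) := by
        calc ‖((A₁ ^ (m + 1))ᵀ - (A₂ ^ (m + 1))ᵀ) * Q₂ * (A₂ ^ (m + 1))‖
            ≤ ‖((A₁ ^ (m + 1))ᵀ - (A₂ ^ (m + 1))ᵀ) * Q₂‖ * ‖A₂ ^ (m + 1)‖ := norm_mul_le _ _
          _ ≤ ‖(A₁ ^ (m + 1))ᵀ - (A₂ ^ (m + 1))ᵀ‖ * ‖Q₂‖ * ‖A₂ ^ (m + 1)‖ := by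
              gcongr; exact norm_mul_le _ _
          _ ≤ ((m + 1 : ℝ) * (τ ^ 2 * ρ ^ m) * Δ) * ‖Q₂‖ * (‖A₂‖ * (τ * ρ ^ m)) := by
              gcongr <;>
                first
                  | exact hpowt
                  | exact hstrip A₂ hA₂ m
                  | positivity
      have hre : ((m + 1 : ℕ) : ℝ) * r ^ ((m + 1) - 1) = (m + 1 : ℝ) * (ρ ^ m * ρ ^ m) := by
        rw [hm, hr]; push_cast; ring
      calc ‖(A₁ ^ (m + 1))ᵀ * Q₂ * ((A₁ ^ (m + 1)) - (A₂ ^ (m + 1))) +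
            ((A₁ ^ (m + 1))ᵀ - (A₂ ^ (m + 1))ᵀ) * Q₂ * (A₂ ^ (m + 1))‖
          ≤ (‖A₁‖ * (τ * ρ ^ m)) * ‖Q₂‖ * ((m + 1 : ℝ) * (τ ^ 2 * ρ ^ m) * Δ) +
            ((m + 1 : ℝ) * (τ ^ 2 * ρ ^ m) * Δ) * ‖Q₂‖ * (‖A₂‖ * (τ * ρ ^ m)) :=
            le_trans (norm_add_le _ _) (add_le_add h1 h2)
        _ = (τ ^ 3 * S * Δ * ‖Q₂‖) * ((m + 1 : ℝ) * (ρ ^ m * ρ ^ m)) := by rw [hS]; ring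
        _ = (τ ^ 3 * S * Δ * ‖Q₂‖) * (((m + 1 : ℕ) : ℝ) * r ^ ((m + 1) - 1)) := by rw [hre]
  -- summability of the bounding series
  have hsum_kr : Summable (fun k : ℕ => (k : ℝ) * r ^ (k - 1)) := by
    have h := summable_pow_mul_geometric_of_norm_lt_one (R := ℝ) 1 (r := r)
      (by rw [Real.norm_eq_abs, abs_of_pos hr0]; exact hr1)
    have h2 : Summable (fun k : ℕ => ((k : ℝ) * r ^ k) / r) := (h.div_const r).congr (fun k => by rw [pow_one])
    refine h2.congr ?_
    intro k
    rcases k with _ | m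
    · simp
    · have : r ^ (m + 1) = r ^ m * r := pow_succ r m
      rw [this]
      field_simp
      simp
  have htsum_kr : ∑' k : ℕ, (k : ℝ) * r ^ (k - 1) = 1 / (1 - r) ^ 2 := by
    have heq : (fun k : ℕ => (k : ℝ) * r ^ (k - 1)) = fun k : ℕ => ((k : ℝ) * r ^ k) / r := by
      funext k
      rcases k with _ | m
      · simp
      · rw [pow_succ]
        field_simp
        simp
    rw [heq, tsum_div_const]
    rw [tsum_coe_mul_geometric_of_norm_lt_one
      (by rw [Real.norm_eq_abs, abs_of_pos hr0]; exact hr1)]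
    field_simp
  have htsum_geom : ∑' k : ℕ, r ^ k = (1 - r)⁻¹ := tsum_geometric_of_lt_one hr0.le hr1
  -- assemble
  have hb : Summable (fun k : ℕ =>
      (τ ^ 2 * ‖Q₁ - Q₂‖) * r ^ k + (τ ^ 3 * S * Δ * ‖Q₂‖) * ((k : ℝ) * r ^ (k - 1))) :=
    (hsum_geom.mul_left _).add (hsum_kr.mul_left _)
  have hnorm_summ : Summable (fun k : ℕ => ‖g₁ k - g₂ k‖) := by
    apply Summable.of_nonneg_of_le (fun k => norm_nonneg _) hkey hb
  calc ‖dlyap A₁ Q₁ - dlyap A₂ Q₂‖ = ‖∑' k : ℕ, (g₁ k - g₂ k)‖ := by rw [hdiff]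
    _ ≤ ∑' k : ℕ, ‖g₁ k - g₂ k‖ := norm_tsum_le_tsum_norm hnorm_summ
    _ ≤ ∑' k : ℕ, ((τ ^ 2 * ‖Q₁ - Q₂‖) * r ^ k +
          (τ ^ 3 * S * Δ * ‖Q₂‖) * ((k : ℝ) * r ^ (k - 1))) :=
        Summable.tsum_le_tsum hkey hnorm_summ hb
    _ = (τ ^ 2 * ‖Q₁ - Q₂‖) * (1 - r)⁻¹ + (τ ^ 3 * S * Δ * ‖Q₂‖) * (1 / (1 - r) ^ 2) := by
        rw [Summable.tsum_add (hsum_geom.mul_left _) (hsum_kr.mul_left _), tsum_mul_left, tsum_mul_left,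
          htsum_geom, htsum_kr]
    _ ≤ τ ^ 2 / (1 - r) * ‖Q₁ - Q₂‖ + τ ^ 4 / (1 - r) ^ 2 * Δ * S * ‖Q₂‖ := by
        have hτ3 : τ ^ 3 ≤ τ ^ 4 := pow_le_pow_right₀ hτ (by norm_num)
        have h2 : (τ ^ 3 * S * Δ * ‖Q₂‖) * (1 / (1 - r) ^ 2) ≤
            τ ^ 4 / (1 - r) ^ 2 * Δ * S * ‖Q₂‖ := by
          have e1 : (τ ^ 3 * S * Δ * ‖Q₂‖) * (1 / (1 - r) ^ 2) =
              τ ^ 3 / (1 - r) ^ 2 * Δ * S * ‖Q₂‖ := by ring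
          rw [e1]
          gcongr <;> positivity
        have h1 : (τ ^ 2 * ‖Q₁ - Q₂‖) * (1 - r)⁻¹ = τ ^ 2 / (1 - r) * ‖Q₁ - Q₂‖ := by
          rw [div_eq_mul_inv]; ring
        rw [h1]
        exact add_le_add le_rfl h2

end DlyapAux

/-- Perturbation bound for solutions of discrete Lyapunov equations. -/
theorem dlyap_perturbation {n : ℕ} (A₁ A₂ Q₁ Q₂ : Matrix (Fin n) (Fin n) ℝ)
    (hQ₁ : Q₁.PosSemidef) (hQ₂ : Q₂.PosSemidef)
    (τ ρ : ℝ) (hτ : 1 ≤ τ) (hρ : ρ ∈ Set.Ioo (0 : ℝ) 1)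
    (hA₁ : ∀ k : ℕ, opNorm (A₁ ^ k) ≤ τ * ρ ^ k)
    (hA₂ : ∀ k : ℕ, opNorm (A₂ ^ k) ≤ τ * ρ ^ k) :
    opNorm (dlyap A₁ Q₁ - dlyap A₂ Q₂) ≤
      τ ^ 2 / (1 - ρ ^ 2) * opNorm (Q₁ - Q₂) +
        τ ^ 4 / (1 - ρ ^ 2) ^ 2 * opNorm (A₁ - A₂) * (opNorm A₁ + opNorm A₂) * opNorm Q₂ :=
  dlyap_perturbation_aux A₁ A₂ Q₁ Q₂ hQ₁ hQ₂ τ ρ hτ hρ hA₁ hA₂
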